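/- Let E be a TMIB space of ultradistributions of class *−†. For any φ ∈ 𝒮^*_†(ℝⁿ) and f ∈ E_loc, the map ℝⁿ → E, x ↦ f·(T_x φ), is continuous, where T_x φ = φ(·−x). -/

import Mathlib

open Filter Topology

/-!
STATEMENT 9.  Abstract formalization.  `D` represents the test space `𝒮^*_†(ℝⁿ)` with
multiplication `mulD` and translation operators `Ttest x` (`T_xφ = φ(·−x)`), `E` is a TMIB
space of class `*−†`, `N` represents the `𝓕L¹_{ν_E}`-norm on test functions, and an
element `f ∈ E_loc` is represented by `Λ : D →ₗ[ℂ] E`, `Λ φ = f·φ`, satisfying the module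
estimate `‖f(φψ)‖_E ≤ N(ψ)‖fφ‖_E`.  The hypotheses include the multiplicative
factorization property of the test space, boundedness of `N` on bounded sets, boundedness
of sets of translates over compacts, and continuity of translation in the
`𝓕L¹_{ν_E}`-norm.
Conclusion: the map `ℝⁿ → E`, `x ↦ f·(T_xφ)`, is continuous.
-/
theorem stmt_9 (n : ℕ)
    (D : Type*) [AddCommGroup D] [Module ℂ D] [TopologicalSpace D]
    [IsTopologicalAddGroup D] [ContinuousSMul ℂ D]
    (E : Type*) [NormedAddCommGroup E] [NormedSpace ℂ E] [CompleteSpace E]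
    (mulD : D →ₗ[ℂ] D →ₗ[ℂ] D)
    (hmulcomm : ∀ a b : D, mulD a b = mulD b a)
    (hmulassoc : ∀ a b c : D, mulD (mulD a b) c = mulD a (mulD b c))
    (Ttest : EuclideanSpace ℝ (Fin n) → D →ₗ[ℂ] D)
    (hTT : ∀ x y : EuclideanSpace ℝ (Fin n), ∀ φ : D,
      Ttest x (Ttest y φ) = Ttest (x + y) φ)
    (hTmul : ∀ x : EuclideanSpace ℝ (Fin n), ∀ φ ψ : D,
      Ttest x (mulD φ ψ) = mulD (Ttest x φ) (Ttest x ψ))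
    (N : D → ℝ) (hN0 : ∀ φ, 0 ≤ N φ)
    (hNbdd : ∀ B : Set D, Bornology.IsVonNBounded ℂ B → ∃ c : ℝ, ∀ ψ ∈ B, N ψ ≤ c)
    (hNTcont : ∀ ψ : D, ∀ x₀ : EuclideanSpace ℝ (Fin n),
      Tendsto (fun x => N (Ttest x ψ - Ttest x₀ ψ)) (𝓝 x₀) (𝓝 0))
    (hTbdd : ∀ (ψ : D) (K : Set (EuclideanSpace ℝ (Fin n))), IsCompact K →
      Bornology.IsVonNBounded ℂ ((fun x => Ttest x ψ) '' K))
    (hfact : ∀ B : Set D, Bornology.IsVonNBounded ℂ B →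
      ∃ χ : D, ∃ B₁ : Set D, Bornology.IsVonNBounded ℂ B₁ ∧
        B = (fun ψ => mulD χ ψ) '' B₁)
    (Λ : D →ₗ[ℂ] E)
    (hmod : ∀ φ ψ : D, ‖Λ (mulD φ ψ)‖ ≤ N ψ * ‖Λ φ‖)
    (φ : D) :
    Continuous fun x : EuclideanSpace ℝ (Fin n) => Λ (Ttest x φ) := by

  -- Factor φ = mulD χ ψ using the factorization property on the singleton {φ}.
  obtain ⟨χ, B₁, hB₁, hBeq⟩ := hfact {φ} (Bornology.isVonNBounded_singleton φ)
  have hφmem : φ ∈ (fun ψ => mulD χ ψ) '' B₁ := by rw [← hBeq]; exact rfl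
  obtain ⟨ψ, hψB, hψ'⟩ := hφmem
  have hψ : mulD χ ψ = φ := hψ'
  rw [continuous_iff_continuousAt]
  intro x₀
  set K := Metric.closedBall x₀ 1 with hKdef
  have hKc : IsCompact K := isCompact_closedBall x₀ 1
  -- Bound ‖Λ (Ttest x χ)‖ uniformly on K.
  obtain ⟨χ', B₁', hB₁', heq'⟩ := hfact _ (hTbdd χ K hKc)
  obtain ⟨c, hc⟩ := hNbdd B₁' hB₁'
  have hMb : ∀ x ∈ K, ‖Λ (Ttest x χ)‖ ≤ c * ‖Λ χ'‖ := by
    intro x hx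
    have hmem : Ttest x χ ∈ (fun ψ => mulD χ' ψ) '' B₁' := by
      rw [← heq']; exact ⟨x, hx, rfl⟩
    obtain ⟨ψ', hψ'B, hψ'0⟩ := hmem
    have hψ' : mulD χ' ψ' = Ttest x χ := hψ'0
    calc ‖Λ (Ttest x χ)‖ = ‖Λ (mulD χ' ψ')‖ := by rw [hψ']
      _ ≤ N ψ' * ‖Λ χ'‖ := hmod χ' ψ'
      _ ≤ c * ‖Λ χ'‖ := mul_le_mul_of_nonneg_right (hc ψ' hψ'B) (norm_nonneg _)
  rw [ContinuousAt, tendsto_iff_norm_sub_tendsto_zero]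
  -- pointwise bound on K
  have hbound : ∀ x ∈ K, ‖Λ (Ttest x φ) - Λ (Ttest x₀ φ)‖ ≤
      N (Ttest x ψ - Ttest x₀ ψ) * (c * ‖Λ χ'‖)
        + N (Ttest x χ - Ttest x₀ χ) * ‖Λ (Ttest x₀ ψ)‖ := by
    intro x hx
    have harg : Ttest x φ - Ttest x₀ φ
        = mulD (Ttest x χ) (Ttest x ψ - Ttest x₀ ψ)
          + mulD (Ttest x₀ ψ) (Ttest x χ - Ttest x₀ χ) := by
      rw [← hψ, map_sub, map_sub, hTmul, hTmul,
        hmulcomm (Ttest x₀ ψ) (Ttest x χ), hmulcomm (Ttest x₀ ψ) (Ttest x₀ χ)]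
      abel
    calc ‖Λ (Ttest x φ) - Λ (Ttest x₀ φ)‖
        = ‖Λ (mulD (Ttest x χ) (Ttest x ψ - Ttest x₀ ψ))
            + Λ (mulD (Ttest x₀ ψ) (Ttest x χ - Ttest x₀ χ))‖ := by
          rw [← map_add, ← harg, map_sub]
      _ ≤ ‖Λ (mulD (Ttest x χ) (Ttest x ψ - Ttest x₀ ψ))‖
            + ‖Λ (mulD (Ttest x₀ ψ) (Ttest x χ - Ttest x₀ χ))‖ := norm_add_le _ _
      _ ≤ N (Ttest x ψ - Ttest x₀ ψ) * ‖Λ (Ttest x χ)‖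
            + N (Ttest x χ - Ttest x₀ χ) * ‖Λ (Ttest x₀ ψ)‖ :=
          add_le_add (hmod _ _) (hmod _ _)
      _ ≤ N (Ttest x ψ - Ttest x₀ ψ) * (c * ‖Λ χ'‖)
            + N (Ttest x χ - Ttest x₀ χ) * ‖Λ (Ttest x₀ ψ)‖ := by
          gcongr
          · exact hN0 _
          · exact hMb x hx
  have hKev : ∀ᶠ x in 𝓝 x₀, x ∈ K :=
    Metric.closedBall_mem_nhds x₀ one_pos
  have hlim : Tendsto (fun x => N (Ttest x ψ - Ttest x₀ ψ) * (c * ‖Λ χ'‖)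
      + N (Ttest x χ - Ttest x₀ χ) * ‖Λ (Ttest x₀ ψ)‖) (𝓝 x₀) (𝓝 0) := by
    have := ((hNTcont ψ x₀).mul_const (c * ‖Λ χ'‖)).add
      ((hNTcont χ x₀).mul_const ‖Λ (Ttest x₀ ψ)‖)
    simpa using this
  exact squeeze_zero' (Eventually.of_forall fun x => norm_nonneg _)
    (hKev.mono hbound) hlim
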